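/- Let E, S be Polish spaces and η ∈ P(E). The map j : L⁰(η, S) → P^S(η) sending U to (I_E × U)_*η is a homeomorphism onto its image, where L⁰(η,S) carries the topology of convergence in probability and P^S(η) carries the topology of weak convergence of measures. -/

import Mathlib

open MeasureTheory ProbabilityTheory Filter Set Topology
open scoped ENNReal

noncomputable section

open TopologicalSpace in
lemma lusin_simpleFunc {E S : Type*} [MeasurableSpace E] [TopologicalSpace E]
    [OpensMeasurableSpace E] [TopologicalSpace S]
    (η : Measure E) [IsFiniteMeasure η] [η.WeaklyRegular]
    (φ : SimpleFunc E S) {ε : ℝ≥0∞} (hε : ε ≠ 0) :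
    ∃ K : Set E, IsClosed K ∧ η Kᶜ < ε ∧ ContinuousOn φ K := by
  classical
  set m := min ε 1 with hm
  have hm0 : m ≠ 0 := (lt_min (pos_iff_ne_zero.mpr hε) zero_lt_one).ne'
  have hmtop : m ≠ ∞ := ne_top_of_le_ne_top ENNReal.one_ne_top (min_le_right _ _)
  set n := φ.range.card with hn
  set δ := m / (n + 1) with hδ
  have hδ0 : δ ≠ 0 := ENNReal.div_ne_zero.mpr ⟨hm0, by simp⟩
  have hδtop : δ ≠ ∞ := by
    exact (ENNReal.div_lt_top hmtop (by exact_mod_cast Nat.succ_ne_zero n)).ne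
  have hnδ : (n : ℝ≥0∞) * δ < ε := by
    have h1 : (n : ℝ≥0∞) * δ < ((n : ℝ≥0∞) + 1) * δ := by
      apply ENNReal.mul_lt_mul_left hδ0 hδtop
      exact ENNReal.lt_add_right (ENNReal.natCast_ne_top n) one_ne_zero
    have h2 : ((n : ℝ≥0∞) + 1) * δ = m := by
      rw [hδ, ENNReal.mul_div_cancel (by exact_mod_cast Nat.succ_ne_zero n) (by simp)]
    exact lt_of_lt_of_le (h2 ▸ h1) (min_le_left _ _)
  -- choose closed subsets of fibers
  choose F hF1 hF2 hF3 using fun y : S =>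
    (φ.measurableSet_fiber y).exists_isClosed_diff_lt (measure_ne_top η _) hδ0
  refine ⟨⋃ y ∈ φ.range, F y, (φ.range.finite_toSet).isClosed_biUnion (fun y _ => hF2 y), ?_, ?_⟩
  · have hsub : (⋃ y ∈ φ.range, F y)ᶜ ⊆ ⋃ y ∈ φ.range, (φ ⁻¹' {y} \ F y) := by
      intro x hx
      refine mem_biUnion (φ.mem_range_self x) ⟨rfl, fun hxF => hx (mem_biUnion (φ.mem_range_self x) hxF)⟩
    calc η (⋃ y ∈ φ.range, F y)ᶜ ≤ ∑ y ∈ φ.range, η (φ ⁻¹' {y} \ F y) :=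
          le_trans (measure_mono hsub) (measure_biUnion_finset_le _ _)
      _ ≤ ∑ _y ∈ φ.range, δ := Finset.sum_le_sum (fun y _ => (hF3 y).le)
      _ = (n : ℝ≥0∞) * δ := by rw [Finset.sum_const, nsmul_eq_mul, hn]
      _ < ε := hnδ
  · intro x hx
    have hφx : φ x ∈ φ.range := φ.mem_range_self x
    set V := (⋃ z ∈ φ.range.erase (φ x), F z)ᶜ with hV
    have hVopen : IsOpen V :=
      (((φ.range.erase (φ x)).finite_toSet).isClosed_biUnion (fun z _ => hF2 z)).isOpen_compl
    have hxV : x ∈ V := by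
      intro hmem
      obtain ⟨z, hz, hxz⟩ := mem_iUnion₂.mp hmem
      have : φ x = z := hF1 z hxz
      exact (Finset.ne_of_mem_erase hz) this.symm
    have heq : ∀ u ∈ (⋃ y ∈ φ.range, F y) ∩ V, φ u = φ x := by
      rintro u ⟨huK, huV⟩
      obtain ⟨z, hz, huz⟩ := mem_iUnion₂.mp huK
      have hφu : φ u = z := hF1 z huz
      by_contra hne
      have : z ∈ φ.range.erase (φ x) :=
        Finset.mem_erase.mpr ⟨fun h => hne (hφu.trans h), hz⟩
      exact huV (mem_biUnion this huz)
    have hev : ∀ᶠ u in 𝓝[(⋃ y ∈ φ.range, F y)] x, φ u = φ x := by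
      filter_upwards [self_mem_nhdsWithin,
        mem_nhdsWithin_of_mem_nhds (hVopen.mem_nhds hxV)] with u h1 h2
      exact heq u ⟨h1, h2⟩
    exact (continuousWithinAt_const (b := φ x)).congr_of_eventuallyEq hev rfl

lemma lusin {E S : Type*} [MeasurableSpace E] [TopologicalSpace E] [PolishSpace E] [BorelSpace E]
    [MeasurableSpace S] [MetricSpace S] [SecondCountableTopology S] [BorelSpace S] [Nonempty S]
    (η : Measure E) [IsFiniteMeasure η] {U : E → S} (hU : Measurable U)
    {ε : ℝ≥0∞} (hε : ε ≠ 0) :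
    ∃ K : Set E, IsClosed K ∧ η Kᶜ < ε ∧ ContinuousOn U K := by
  set m := min ε 1 with hm
  have hm0 : m ≠ 0 := (lt_min (pos_iff_ne_zero.mpr hε) zero_lt_one).ne'
  have hmtop : m ≠ ∞ := ne_top_of_le_ne_top ENNReal.one_ne_top (min_le_right _ _)
  have hq0 : m / 4 ≠ 0 := ENNReal.div_ne_zero.mpr ⟨hm0, by norm_num⟩
  have hqtop : m / 4 ≠ ∞ := (ENNReal.div_lt_top hmtop (by norm_num)).ne
  obtain ⟨y₀⟩ := ‹Nonempty S›
  set φ : ℕ → SimpleFunc E S := fun k => SimpleFunc.approxOn U hU univ y₀ (mem_univ y₀) k with hφdef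
  have hφ : ∀ x, Tendsto (fun k => φ k x) atTop (𝓝 (U x)) := fun x =>
    SimpleFunc.tendsto_approxOn hU (mem_univ y₀) (by simp)
  -- Egorov
  have hr : (0 : ℝ) < (m / 4).toReal := ENNReal.toReal_pos hq0 hqtop
  obtain ⟨t, tmeas, htle, hunif⟩ :=
    tendstoUniformlyOn_of_ae_tendsto' (μ := η) (fun k => (φ k).stronglyMeasurable)
      hU.stronglyMeasurable (ae_of_all _ hφ) hr
  rw [ENNReal.ofReal_toReal hqtop] at htle
  -- closed subset of tᶜ
  obtain ⟨F₀, hF₀sub, hF₀closed, hF₀lt⟩ :=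
    tmeas.compl.exists_isClosed_diff_lt (measure_ne_top η _) hq0
  -- closed sets for the simple functions
  obtain ⟨δ, δpos, δsum⟩ := ENNReal.exists_pos_sum_of_countable hq0 ℕ
  choose C hC1 hC2 hC3 using fun k =>
    lusin_simpleFunc η (φ k) (ε := δ k) (ENNReal.coe_ne_zero.mpr (δpos k).ne')
  refine ⟨F₀ ∩ ⋂ k, C k, hF₀closed.inter (isClosed_iInter fun k => hC1 k), ?_, ?_⟩
  · have hsub : (F₀ ∩ ⋂ k, C k)ᶜ ⊆ (t ∪ (tᶜ \ F₀)) ∪ ⋃ k, (C k)ᶜ := by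
      intro x hx
      rw [compl_inter, compl_iInter] at hx
      rcases hx with hx | hx
      · rcases em (x ∈ t) with h | h
        · exact Or.inl (Or.inl h)
        · exact Or.inl (Or.inr ⟨h, hx⟩)
      · exact Or.inr hx
    have hb : η (F₀ ∩ ⋂ k, C k)ᶜ ≤ (η t + η (tᶜ \ F₀)) + ∑' k, η (C k)ᶜ := by
      refine le_trans (measure_mono hsub) ?_
      refine le_trans (measure_union_le _ _) (add_le_add ?_ (measure_iUnion_le _))
      exact measure_union_le _ _
    have hlt : (η t + η (tᶜ \ F₀)) + ∑' k, η (C k)ᶜ < (m/4 + m/4) + m/4 :=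
      ENNReal.add_lt_add (ENNReal.add_lt_add_of_le_of_lt (measure_ne_top η t) htle hF₀lt)
        (lt_of_le_of_lt (ENNReal.tsum_le_tsum fun k => (hC2 k).le) δsum)
    have key : m/4 + m/4 + m/4 + m/4 = m := by
      rw [show m/4 + m/4 + m/4 + m/4 = m/4 * 4 by ring]
      exact ENNReal.div_mul_cancel (by norm_num) (by norm_num)
    have hfin : (m/4 + m/4) + m/4 ≤ ε := by
      refine le_trans (le_trans (self_le_add_right _ _) key.le) (min_le_left _ _)
    exact lt_of_le_of_lt hb (lt_of_lt_of_le hlt hfin)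
  · have hKt : F₀ ∩ ⋂ k, C k ⊆ tᶜ := fun x hx => hF₀sub hx.1
    refine TendstoUniformlyOn.continuousOn (hunif.mono hKt) ?_
    exact Frequently.of_forall fun k =>
      (hC3 k).mono (fun x (hx : x ∈ F₀ ∩ ⋂ k, C k) => mem_iInter.mp hx.2 k)


/-- the map `j : L⁰(η,S) → P^S(η)`, `U ↦ (I_E × U)_* η`, is a homeomorphism
onto its image: it is injective on a.e.-classes, and (both topologies being metrizable,
via a sequential characterization) it is continuous with continuous inverse: a sequence of
maps converges in probability iff the associated plans converge weakly in measure. -/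
theorem embedding_L0_into_plans
    {E S : Type*} [MeasurableSpace E] [TopologicalSpace E] [PolishSpace E] [BorelSpace E]
    [MeasurableSpace S] [MetricSpace S] [CompleteSpace S] [SecondCountableTopology S]
    [BorelSpace S]
    (η : Measure E) [IsProbabilityMeasure η] :
    (∀ U V : E → S, Measurable U → Measurable V →
      (η.map (fun ω => (ω, U ω)) = η.map (fun ω => (ω, V ω)) ↔ U =ᵐ[η] V)) ∧
    (∀ (Useq : ℕ → E → S) (U : E → S), (∀ n, Measurable (Useq n)) → Measurable U →
      (TendstoInMeasure η Useq atTop U ↔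
        ∀ f : BoundedContinuousFunction (E × S) ℝ,
          Tendsto (fun n => ∫ x, f x ∂(η.map (fun ω => (ω, Useq n ω)))) atTop
            (𝓝 (∫ x, f x ∂(η.map (fun ω => (ω, U ω))))))) := by
  have hNE : Nonempty E := by
    by_contra h
    rw [not_nonempty_iff] at h
    have h0 : (univ : Set E) = ∅ := Set.univ_eq_empty_iff.mpr h
    have h1 := measure_univ (μ := η)
    rw [h0, measure_empty] at h1
    exact zero_ne_one h1
  constructor
  · -- injectivity
    intro U V hU hV
    constructor
    · intro h
      have hmU' : Measurable fun ω : E => (ω, U ω) := measurable_id.prodMk hU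
      have hmV' : Measurable fun ω : E => (ω, V ω) := measurable_id.prodMk hV
      have hg : Measurable (fun p : E × S => min (edist p.2 (U p.1)) 1) :=
        (measurable_snd.edist (hU.comp measurable_fst)).min measurable_const
      have h1 : ∫⁻ p, min (edist p.2 (U p.1)) 1 ∂(η.map (fun ω => (ω, U ω))) = 0 := by
        rw [lintegral_map hg hmU']
        simp [edist_self]
      have h2 : ∫⁻ ω, min (edist (V ω) (U ω)) 1 ∂η = 0 := by
        have := lintegral_map (μ := η) hg hmV'
        rw [← h, h1] at this
        exact this.symm
      have h3 : ∀ᵐ ω ∂η, min (edist (V ω) (U ω)) 1 = 0 :=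
        (lintegral_eq_zero_iff ((hV.edist hU).min measurable_const)).mp h2
      filter_upwards [h3] with ω hω
      rcases le_total (edist (V ω) (U ω)) 1 with hle | hle
      · rw [min_eq_left hle] at hω
        exact (edist_eq_zero.mp hω).symm
      · rw [min_eq_right hle] at hω
        exact absurd hω one_ne_zero
    · intro h
      exact Measure.map_congr (h.mono fun ω hω => by dsimp only; rw [hω])
  · -- sequential characterization
    intro Useq U hUseq hU
    have hS : Nonempty S := ⟨U (Classical.arbitrary E)⟩
    have hmU : Measurable fun ω : E => (ω, U ω) := measurable_id.prodMk hU
    have hmUn : ∀ n, Measurable fun ω : E => (ω, Useq n ω) :=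
      fun n => measurable_id.prodMk (hUseq n)
    have instμ : IsProbabilityMeasure (η.map (fun ω => (ω, U ω))) :=
      Measure.isProbabilityMeasure_map hmU.aemeasurable
    have instμn : ∀ n, IsProbabilityMeasure (η.map (fun ω => (ω, Useq n ω))) :=
      fun n => Measure.isProbabilityMeasure_map (hmUn n).aemeasurable
    constructor
    · -- convergence in measure → weak convergence
      intro h f
      have hint : ∀ (W : E → S), Measurable W →
          ∫ x, f x ∂(η.map (fun ω => (ω, W ω))) = ∫ ω, f (ω, W ω) ∂η := fun W hW =>
        integral_map (measurable_id.prodMk hW : Measurable fun ω : E => (ω, W ω)).aemeasurable f.continuous.aestronglyMeasurable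
      simp only [hint _ (hUseq _), hint _ hU]
      apply tendsto_of_subseq_tendsto
      intro ns hns
      have hsub : TendstoInMeasure η (fun i => Useq (ns i)) atTop U :=
        fun ε hε => (h ε hε).comp hns
      obtain ⟨ms, hms, hae⟩ := hsub.exists_seq_tendsto_ae
      refine ⟨ms, ?_⟩
      apply tendsto_integral_of_dominated_convergence (bound := fun _ => ‖f‖)
      · exact fun i =>
          (f.continuous.measurable.comp (hmUn (ns (ms i)))).aestronglyMeasurable
      · exact integrable_const _
      · exact fun i => ae_of_all _ fun ω => f.norm_coe_le_norm _
      · filter_upwards [hae] with ω hω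
        exact (f.continuous.tendsto _).comp (tendsto_const_nhds.prodMk_nhds hω)
    · -- weak convergence → convergence in measure
      intro h ε hε
      set P : ProbabilityMeasure (E × S) := ⟨η.map (fun ω => (ω, U ω)), instμ⟩ with hP
      set Pn : ℕ → ProbabilityMeasure (E × S) :=
        fun n => ⟨η.map (fun ω => (ω, Useq n ω)), instμn n⟩ with hPn
      have hPtend : Tendsto Pn atTop (𝓝 P) :=
        ProbabilityMeasure.tendsto_iff_forall_integral_tendsto.mpr h
      rw [ENNReal.tendsto_nhds_zero]
      intro δ hδ
      have hδ2 : (δ / 2 : ℝ≥0∞) ≠ 0 := (ENNReal.div_pos hδ.ne' ENNReal.ofNat_ne_top).ne'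
      obtain ⟨K, hKclosed, hKlt, hKcont⟩ := lusin η hU hδ2
      set C : Set (E × S) := {p | p.1 ∈ K ∧ ε ≤ edist p.2 (U p.1)} with hC
      have hCclosed : IsClosed C := by
        have hcont : ContinuousOn (fun p : E × S => edist p.2 (U p.1)) (K ×ˢ univ) :=
          continuous_edist.comp_continuousOn
            (continuous_snd.continuousOn.prodMk
              (hKcont.comp continuous_fst.continuousOn (fun p (hp : p ∈ K ×ˢ univ) => hp.1)))
        have h' := hcont.preimage_isClosed_of_isClosed (hKclosed.prod isClosed_univ) (isClosed_Ici (a := ε))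
        have : C = (K ×ˢ univ) ∩ (fun p : E × S => edist p.2 (U p.1)) ⁻¹' Ici ε := by
          ext p; simp [hC, Set.mem_prod, and_comm]
        rwa [this]
      have hμC : (η.map (fun ω => (ω, U ω))) C = 0 := by
        rw [Measure.map_apply hmU hCclosed.measurableSet]
        have hemp : (fun ω => (ω, U ω)) ⁻¹' C = ∅ := by
          rw [eq_empty_iff_forall_notMem]
          intro ω hω
          have := hω.2
          rw [edist_self] at this
          exact absurd this (not_le.mpr hε)
        rw [hemp, measure_empty]
      have hlimsup : limsup (fun n => (η.map (fun ω => (ω, Useq n ω))) C) atTop ≤ 0 := by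
        have := ProbabilityMeasure.limsup_measure_closed_le_of_tendsto hPtend hCclosed
        rw [show ((P : Measure (E × S))) = η.map (fun ω => (ω, U ω)) from rfl, hμC] at this
        exact this
      have hev : ∀ᶠ n in atTop, (η.map (fun ω => (ω, Useq n ω))) C < δ / 2 :=
        Filter.eventually_lt_of_limsup_lt
          (lt_of_le_of_lt hlimsup (pos_iff_ne_zero.mpr hδ2))
      filter_upwards [hev] with n hn
      have hsub : {x | ε ≤ edist (Useq n x) (U x)} ⊆
          Kᶜ ∪ ((fun ω => (ω, Useq n ω)) ⁻¹' C) := by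
        intro x hx
        rcases em (x ∈ K) with hK' | hK'
        · exact Or.inr ⟨hK', hx⟩
        · exact Or.inl hK'
      calc η {x | ε ≤ edist (Useq n x) (U x)}
          ≤ η (Kᶜ ∪ ((fun ω => (ω, Useq n ω)) ⁻¹' C)) := measure_mono hsub
        _ ≤ η Kᶜ + η ((fun ω => (ω, Useq n ω)) ⁻¹' C) := measure_union_le _ _
        _ = η Kᶜ + (η.map (fun ω => (ω, Useq n ω))) C := by
            rw [Measure.map_apply (hmUn n) hCclosed.measurableSet]
        _ ≤ δ / 2 + δ / 2 := add_le_add hKlt.le hn.le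
        _ = δ := ENNReal.add_halves δ
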